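/- arXiv:1211.1823 — 2 statements merged into one kernel-verified Lean document; each statement's English description precedes it below -/
import Mathlib

section
/- For any real numbers α and any k ≥ 1, the function v_k(β) = ∫_0^{P} e(β γ^k) dγ satisfies |v_k(β)| ≤ min(P, C·P·(1 + |β| P^k)^{-1/k}) for an absolute constant C depending only on k. -/
open MeasureTheory intervalIntegral Set Complex

noncomputable section SIB

private lemma sib_norm_one (β γ : ℝ) (k : ℕ) :
    ‖Complex.exp (2 * Real.pi * Complex.I * (β * (γ:ℂ) ^ k))‖ = 1 := by
  have h : 2 * (Real.pi:ℂ) * Complex.I * ((β:ℂ) * (γ:ℂ) ^ k)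
      = ((2 * Real.pi * (β * γ ^ k) : ℝ) : ℂ) * Complex.I := by
    push_cast; ring
  rw [h, Complex.norm_exp_ofReal_mul_I]

private lemma sib_cont (β : ℝ) (k : ℕ) :
    Continuous fun γ : ℝ => Complex.exp (2 * Real.pi * Complex.I * (β * (γ:ℂ) ^ k)) := by
  fun_prop

private lemma sib_exp_deriv (β : ℝ) (k : ℕ) (x : ℝ) :
    HasDerivAt (fun γ : ℝ => Complex.exp (2 * Real.pi * Complex.I * (β * (γ:ℂ) ^ k)))
      (Complex.exp (2 * Real.pi * Complex.I * (β * (x:ℂ) ^ k)) *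
        (2 * Real.pi * Complex.I * (β * (k * (x:ℂ) ^ (k-1))))) x := by
  have hg : HasDerivAt (fun γ : ℝ => β * γ ^ k) (β * (k * x ^ (k-1))) x :=
    (hasDerivAt_pow k x).const_mul β
  have hg2 := (hg.ofReal_comp).const_mul (2 * (Real.pi:ℂ) * Complex.I)
  have hfun : (fun γ : ℝ => 2 * (Real.pi:ℂ) * Complex.I * ((β * γ ^ k : ℝ) : ℂ))
      = fun γ : ℝ => 2 * Real.pi * Complex.I * ((β:ℂ) * (γ:ℂ) ^ k) := by
    funext γ; push_cast; ring
  rw [hfun] at hg2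
  have := hg2.cexp
  convert this using 1
  push_cast; ring

private lemma sib_aux (k : ℕ) (hk : 1 ≤ k) {β P : ℝ} (hβ : 0 < β) (hP : 0 < P)
    (h1 : 1 ≤ β * P ^ k) :
    ‖∫ γ in (0:ℝ)..P, Complex.exp (2 * Real.pi * Complex.I * (β * γ ^ k))‖ ≤
      2 * β ^ (-(1 / (k : ℝ))) := by
  have hk0 : (k:ℝ) ≠ 0 := Nat.cast_ne_zero.mpr (by omega)
  have hkpos : (0:ℝ) < k := by positivity
  set a : ℝ := β ^ (-(1 / (k : ℝ))) with ha_def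
  have ha0 : 0 < a := Real.rpow_pos_of_pos hβ _
  -- a ^ k = β⁻¹
  have hak : a ^ k = β⁻¹ := by
    rw [ha_def, ← Real.rpow_natCast (β ^ (-(1 / (k:ℝ)))) k, ← Real.rpow_mul hβ.le]
    rw [show -(1 / (k:ℝ)) * k = -1 by field_simp]
    exact Real.rpow_neg_one β
  have haP : a ≤ P := by
    have h2 : β⁻¹ ≤ P ^ k := by
      rw [inv_le_iff_one_le_mul₀ hβ]
      linarith [h1]
    have : a ^ k ≤ P ^ k := by rw [hak]; exact h2
    exact le_of_pow_le_pow_left₀ (by omega) hP.le this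
  -- constant c
  set c : ℂ := 2 * Real.pi * Complex.I * ((k:ℂ) * (β:ℂ)) with hc_def
  have hc0 : c ≠ 0 := by
    simp only [hc_def]
    have : k ≠ 0 := by omega
    simp [Complex.I_ne_zero, Real.pi_ne_zero, this, hβ.ne']
  have hcnorm : ‖c‖ = 2 * Real.pi * k * β := by
    simp only [hc_def, norm_mul, Complex.norm_I, Complex.norm_real, Real.norm_eq_abs,
      Complex.norm_two, Complex.norm_natCast]
    rw [abs_of_pos Real.pi_pos, abs_of_pos hβ]
    ring
  set f : ℝ → ℂ := fun γ => Complex.exp (2 * Real.pi * Complex.I * ((β:ℂ) * (γ:ℂ) ^ k)) with hf_def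
  set u : ℝ → ℂ := fun γ => ((γ ^ (1 - (k:ℝ)) : ℝ) : ℂ) with hu_def
  set u' : ℝ → ℂ := fun γ => (((1 - (k:ℝ)) * γ ^ (-(k:ℝ)) : ℝ) : ℂ) with hu'_def
  set v : ℝ → ℂ := fun γ => f γ / c with hv_def
  set v' : ℝ → ℂ := fun γ => f γ * ((γ:ℂ) ^ (k-1)) with hv'_def
  have huIcc : uIcc a P = Icc a P := uIcc_of_le haP
  have hpos : ∀ x ∈ uIcc a P, 0 < x := by
    intro x hx; rw [huIcc] at hx; exact lt_of_lt_of_le ha0 hx.1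
  -- derivatives
  have hu : ∀ x ∈ uIcc a P, HasDerivAt u (u' x) x := by
    intro x hx
    have hx0 : x ≠ 0 := (hpos x hx).ne'
    have h := (Real.hasDerivAt_rpow_const (p := 1 - (k:ℝ)) (Or.inl hx0)).ofReal_comp
    have he : (1 - (k:ℝ)) - 1 = -(k:ℝ) := by ring
    rw [he] at h
    exact h
  have hv : ∀ x ∈ uIcc a P, HasDerivAt v (v' x) x := by
    intro x _
    have h := (sib_exp_deriv β k x).div_const c
    refine HasDerivAt.congr_deriv h (Eq.symm ?_)
    rw [hv'_def, eq_div_iff hc0]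
    simp only [hc_def]
    push_cast
    ring
  -- integrability
  have hu'i : IntervalIntegrable u' volume a P := by
    apply ContinuousOn.intervalIntegrable
    apply Complex.continuous_ofReal.comp_continuousOn
    apply ContinuousOn.mul continuousOn_const
    intro x hx
    exact (Real.continuousAt_rpow_const x _ (Or.inl (hpos x hx).ne')).continuousWithinAt
  have hv'i : IntervalIntegrable v' volume a P := by
    apply Continuous.intervalIntegrable
    exact (sib_cont β k).mul (Complex.continuous_ofReal.pow _)
  have hIBP := intervalIntegral.integral_mul_deriv_eq_deriv_mul hu hv hu'i hv'i
  -- ∫ f = ∫ u * v'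
  have hcongr : ∫ x in a..P, f x = ∫ x in a..P, u x * v' x := by
    apply intervalIntegral.integral_congr
    intro x hx
    have hx0 : 0 < x := hpos x hx
    have hone : x ^ (1 - (k:ℝ)) * x ^ (k-1) = 1 := by
      rw [← Real.rpow_natCast x (k-1), ← Real.rpow_add hx0]
      have : (1 - (k:ℝ)) + ((k-1 : ℕ) : ℝ) = 0 := by
        rw [Nat.cast_sub hk]; push_cast; ring
      rw [this, Real.rpow_zero]
    have : u x * v' x = f x * ((x ^ (1 - (k:ℝ)) * x ^ (k-1) : ℝ) : ℂ) := by
      simp only [hu_def, hv'_def]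
      push_cast
      ring
    show f x = u x * v' x
    rw [this, hone]
    simp
  -- norm of v
  have hvnorm : ∀ x : ℝ, ‖v x‖ = 1 / (2 * Real.pi * k * β) := by
    intro x
    rw [hv_def]
    simp only [norm_div, hcnorm]
    rw [hf_def]
    simp only [sib_norm_one]
  have hden : (0:ℝ) < 2 * Real.pi * k * β := by positivity
  -- bound on ∫ u' v
  have hint_g : ∫ x in a..P, ((k:ℝ) - 1) * x ^ (-(k:ℝ)) =
      a ^ (1 - (k:ℝ)) - P ^ (1 - (k:ℝ)) := by
    have hderiv : ∀ x ∈ uIcc a P,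
        HasDerivAt (fun y : ℝ => -(y ^ (1 - (k:ℝ)))) (((k:ℝ) - 1) * x ^ (-(k:ℝ))) x := by
      intro x hx
      have hx0 : x ≠ 0 := (hpos x hx).ne'
      have h := (Real.hasDerivAt_rpow_const (p := 1 - (k:ℝ)) (Or.inl hx0)).neg
      have he : -((1 - (k:ℝ)) * x ^ (1 - (k:ℝ) - 1)) = ((k:ℝ) - 1) * x ^ (-(k:ℝ)) := by
        rw [show (1 - (k:ℝ)) - 1 = -(k:ℝ) by ring]; ring
      rw [he] at h
      exact h
    have hgi : IntervalIntegrable (fun x : ℝ => ((k:ℝ) - 1) * x ^ (-(k:ℝ))) volume a P := by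
      apply ContinuousOn.intervalIntegrable
      apply ContinuousOn.mul continuousOn_const
      intro x hx
      exact (Real.continuousAt_rpow_const x _ (Or.inl (hpos x hx).ne')).continuousWithinAt
    have := intervalIntegral.integral_eq_sub_of_hasDerivAt hderiv hgi
    rw [this]; ring
  have hmono : P ^ (1 - (k:ℝ)) ≤ a ^ (1 - (k:ℝ)) := by
    apply Real.rpow_le_rpow_of_nonpos ha0 haP
    have : (1:ℝ) ≤ (k:ℝ) := by exact_mod_cast hk
    linarith
  have hB : ‖∫ x in a..P, u' x * v x‖ ≤
      (a ^ (1 - (k:ℝ)) - P ^ (1 - (k:ℝ))) / (2 * Real.pi * k * β) := by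
    have hptwise : ∀ t ∈ uIoc a P, ‖u' t * v t‖ ≤
        (((k:ℝ) - 1) * t ^ (-(k:ℝ))) * (1 / (2 * Real.pi * k * β)) := by
      intro t ht
      rw [uIoc_of_le haP] at ht
      have ht0 : 0 < t := lt_trans ha0 ht.1
      rw [norm_mul, hvnorm]
      apply mul_le_mul_of_nonneg_right _ (by positivity)
      rw [hu'_def]
      simp only [Complex.norm_real, Real.norm_eq_abs]
      rw [abs_mul, _root_.abs_of_nonneg (Real.rpow_nonneg ht0.le _)]
      have : |1 - (k:ℝ)| = (k:ℝ) - 1 := by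
        rw [abs_of_nonpos]
        · ring
        · have : (1:ℝ) ≤ (k:ℝ) := by exact_mod_cast hk
          linarith
      rw [this]
    have hgi2 : IntervalIntegrable
        (fun t : ℝ => (((k:ℝ) - 1) * t ^ (-(k:ℝ))) * (1 / (2 * Real.pi * k * β))) volume a P := by
      apply ContinuousOn.intervalIntegrable
      apply ContinuousOn.mul _ continuousOn_const
      apply ContinuousOn.mul continuousOn_const
      intro x hx
      exact (Real.continuousAt_rpow_const x _ (Or.inl (hpos x hx).ne')).continuousWithinAt
    have h := intervalIntegral.norm_integral_le_abs_of_norm_le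
      (f := fun t => u' t * v t)
      (g := fun t => (((k:ℝ) - 1) * t ^ (-(k:ℝ))) * (1 / (2 * Real.pi * k * β)))
      ((ae_restrict_iff' measurableSet_uIoc).mpr (Filter.Eventually.of_forall hptwise)) hgi2
    calc ‖∫ x in a..P, u' x * v x‖
        ≤ |∫ t in a..P, (((k:ℝ) - 1) * t ^ (-(k:ℝ))) * (1 / (2 * Real.pi * k * β))| := h
      _ = |(∫ t in a..P, ((k:ℝ) - 1) * t ^ (-(k:ℝ))) * (1 / (2 * Real.pi * k * β))| := by
          rw [intervalIntegral.integral_mul_const]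
      _ = (a ^ (1 - (k:ℝ)) - P ^ (1 - (k:ℝ))) / (2 * Real.pi * k * β) := by
          rw [hint_g, mul_one_div]
          exact _root_.abs_of_nonneg (div_nonneg (by linarith [hmono]) hden.le)
  -- norms of boundary terms
  have hnormu : ∀ x : ℝ, 0 < x → ‖u x‖ = x ^ (1 - (k:ℝ)) := by
    intro x hx
    rw [hu_def]
    simp only [Complex.norm_real, Real.norm_eq_abs]
    exact _root_.abs_of_nonneg (Real.rpow_nonneg hx.le _)
  -- assemble the tail bound
  have haPk : ‖∫ x in a..P, f x‖ ≤ a ^ (1 - (k:ℝ)) / (Real.pi * k * β) := by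
    rw [hcongr, hIBP]
    have h1' : ‖u P * v P - u a * v a - ∫ x in a..P, u' x * v x‖ ≤
        ‖u P‖ * ‖v P‖ + ‖u a‖ * ‖v a‖ + ‖∫ x in a..P, u' x * v x‖ := by
      calc ‖u P * v P - u a * v a - ∫ x in a..P, u' x * v x‖
          ≤ ‖u P * v P - u a * v a‖ + ‖∫ x in a..P, u' x * v x‖ := norm_sub_le _ _
        _ ≤ ‖u P * v P‖ + ‖u a * v a‖ + ‖∫ x in a..P, u' x * v x‖ := by
            have := norm_sub_le (u P * v P) (u a * v a); linarith
        _ = ‖u P‖ * ‖v P‖ + ‖u a‖ * ‖v a‖ + ‖∫ x in a..P, u' x * v x‖ := by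
            rw [norm_mul, norm_mul]
    have hvP := hvnorm P
    have hva := hvnorm a
    have huP := hnormu P hP
    have hua := hnormu a ha0
    have : ‖u P‖ * ‖v P‖ + ‖u a‖ * ‖v a‖ + ‖∫ x in a..P, u' x * v x‖ ≤
        a ^ (1 - (k:ℝ)) / (Real.pi * k * β) := by
      rw [hvP, hva, huP, hua]
      have hπ : (0:ℝ) < Real.pi := Real.pi_pos
      have hkey : P ^ (1 - (k:ℝ)) * (1 / (2 * Real.pi * k * β)) +
          a ^ (1 - (k:ℝ)) * (1 / (2 * Real.pi * k * β)) +
          (a ^ (1 - (k:ℝ)) - P ^ (1 - (k:ℝ))) / (2 * Real.pi * k * β) =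
          a ^ (1 - (k:ℝ)) / (Real.pi * k * β) := by
        field_simp
        ring
      linarith [hB]
    linarith
  -- a ^ (1 - k) = a * β
  have hab : a ^ (1 - (k:ℝ)) = a * β := by
    rw [ha_def, ← Real.rpow_mul hβ.le]
    have he : -(1 / (k:ℝ)) * (1 - (k:ℝ)) = -(1 / (k:ℝ)) + 1 := by
      field_simp
      ring
    rw [he, Real.rpow_add hβ, Real.rpow_one]
  -- first piece
  have h01 : ‖∫ γ in (0:ℝ)..a, f γ‖ ≤ a := by
    have := intervalIntegral.norm_integral_le_of_norm_le_const
      (a := 0) (b := a) (C := 1) (f := f) (fun x _ => by rw [hf_def]; exact (sib_norm_one β x k).le)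
    simpa [_root_.abs_of_nonneg ha0.le] using this
  -- combine
  have hsplit : (∫ γ in (0:ℝ)..P, f γ) = (∫ γ in (0:ℝ)..a, f γ) + ∫ γ in a..P, f γ :=
    (intervalIntegral.integral_add_adjacent_intervals
      ((sib_cont β k).intervalIntegrable _ _) ((sib_cont β k).intervalIntegrable _ _)).symm
  have htail : ‖∫ x in a..P, f x‖ ≤ a := by
    refine le_trans haPk ?_
    rw [hab]
    rw [div_le_iff₀ (by positivity)]
    have hπ : (1:ℝ) ≤ Real.pi := by linarith [Real.pi_gt_three]
    have hk1 : (1:ℝ) ≤ (k:ℝ) := by exact_mod_cast hk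
    have hπk : (1:ℝ) ≤ Real.pi * k := by nlinarith
    have := mul_le_mul_of_nonneg_right hπk (mul_pos ha0 hβ).le
    nlinarith
  calc ‖∫ γ in (0:ℝ)..P, f γ‖ ≤ ‖∫ γ in (0:ℝ)..a, f γ‖ + ‖∫ γ in a..P, f γ‖ := by
        rw [hsplit]; exact norm_add_le _ _
    _ ≤ a + a := add_le_add h01 htail
    _ = 2 * β ^ (-(1 / (k:ℝ))) := by rw [← ha_def]; ring

private lemma sib_integral_conj (g : ℝ → ℂ) (a b : ℝ) :
    ∫ x in a..b, (starRingEnd ℂ) (g x) = (starRingEnd ℂ) (∫ x in a..b, g x) := by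
  rw [intervalIntegral.intervalIntegral_eq_integral_uIoc,
    intervalIntegral.intervalIntegral_eq_integral_uIoc, integral_conj]
  rcases le_or_gt a b with h|h
  · simp [h, Complex.real_smul]
  · simp [h.not_ge, Complex.real_smul]

end SIB

theorem singular_integral_bound (k : ℕ) (hk : 1 ≤ k) :
    ∃ C : ℝ, 0 < C ∧ ∀ P : ℝ, 0 < P → ∀ β : ℝ,
      ‖∫ γ in (0:ℝ)..P, Complex.exp (2 * Real.pi * Complex.I * (β * γ ^ k))‖ ≤
        min P (C * P * (1 + |β| * P ^ k) ^ (-(1 / (k : ℝ)))) := by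
  refine ⟨4, by norm_num, ?_⟩
  intro P hP β
  have hk0 : (k:ℝ) ≠ 0 := Nat.cast_ne_zero.mpr (by omega)
  have hk1 : (1:ℝ) ≤ (k:ℝ) := by exact_mod_cast hk
  set e : ℝ := -(1 / (k:ℝ)) with he_def
  have he_neg : e ≤ 0 := by
    rw [he_def]
    simp only [neg_nonpos]
    positivity
  have he_ge : (-1:ℝ) ≤ e := by
    rw [he_def, neg_le_neg_iff]
    rw [div_le_one (by positivity)]
    exact hk1
  have h2e : (1:ℝ)/2 ≤ (2:ℝ) ^ e := by
    have := Real.rpow_le_rpow_of_exponent_le (by norm_num : (1:ℝ) ≤ 2) he_ge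
    rw [Real.rpow_neg_one] at this
    linarith
  set t : ℝ := |β| * P ^ k with ht_def
  have ht0 : 0 ≤ t := by positivity
  have hP_bound : ‖∫ γ in (0:ℝ)..P, Complex.exp (2 * Real.pi * Complex.I * (β * γ ^ k))‖ ≤ P := by
    have := intervalIntegral.norm_integral_le_of_norm_le_const (a := 0) (b := P) (C := 1)
      (f := fun γ : ℝ => Complex.exp (2 * Real.pi * Complex.I * ((β:ℂ) * (γ:ℂ) ^ k)))
      (fun x _ => (sib_norm_one β x k).le)
    simpa [_root_.abs_of_nonneg hP.le] using this
  rw [le_min_iff]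
  refine ⟨hP_bound, ?_⟩
  have h1t : (0:ℝ) < 1 + t := by linarith
  have habs : ‖∫ γ in (0:ℝ)..P, Complex.exp (2 * Real.pi * Complex.I * ((β:ℂ) * (γ:ℂ) ^ k))‖ =
      ‖∫ γ in (0:ℝ)..P, Complex.exp (2 * Real.pi * Complex.I * (((|β| : ℝ) : ℂ) * (γ:ℂ) ^ k))‖ := by
    rcases abs_choice β with h|h
    · rw [h]
    · rw [h]
      have hfun : (fun γ : ℝ => Complex.exp (2 * Real.pi * Complex.I * (((-β:ℝ):ℂ) * (γ:ℂ) ^ k)))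
          = fun γ : ℝ => (starRingEnd ℂ)
              (Complex.exp (2 * Real.pi * Complex.I * ((β:ℂ) * (γ:ℂ) ^ k))) := by
        funext γ
        rw [← Complex.exp_conj]
        congr 1
        simp only [map_mul, map_pow, Complex.conj_I, Complex.conj_ofReal, map_ofNat]
        push_cast
        ring
      rw [hfun, sib_integral_conj, RCLike.norm_conj]
  rw [habs]
  by_cases hcase : 1 ≤ |β| * P ^ k
  · have hβ0 : β ≠ 0 := by
      rintro rfl
      simp at hcase
      nlinarith [pow_pos hP k]
    have hβpos : 0 < |β| := abs_pos.mpr hβ0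
    have key := sib_aux k hk hβpos hP hcase
    refine key.trans ?_
    -- 2 * |β| ^ e ≤ 4 * P * (1 + t) ^ e
    have hupper : (2 * t) ^ e ≤ (1 + t) ^ e :=
      Real.rpow_le_rpow_of_nonpos h1t (by linarith) he_neg
    have hsplit2 : (2 * t) ^ e = 2 ^ e * (|β| ^ e * P ^ ((k:ℝ) * e)) := by
      rw [Real.mul_rpow (by norm_num) ht0, ht_def,
        Real.mul_rpow (abs_nonneg β) (by positivity),
        ← Real.rpow_natCast P k, ← Real.rpow_mul hP.le]
    have hPke : P ^ ((k:ℝ) * e) = P⁻¹ := by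
      rw [show (k:ℝ) * e = -1 by rw [he_def]; field_simp, Real.rpow_neg_one]
    have hfin : 2 * |β| ^ e ≤ 4 * P * ((2 * t) ^ e) := by
      rw [hsplit2, hPke]
      have hbe : 0 < |β| ^ e := Real.rpow_pos_of_pos hβpos e
      have : 4 * P * (2 ^ e * (|β| ^ e * P⁻¹)) = 4 * 2 ^ e * |β| ^ e := by
        field_simp
      rw [this]
      nlinarith
    refine hfin.trans ?_
    have : (0:ℝ) ≤ 4 * P := by positivity
    nlinarith [hupper]
  · push_neg at hcase
    rw [← habs]
    refine le_trans hP_bound ?_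
    have h1t2 : 1 + t ≤ 2 := by rw [ht_def] at *; linarith
    have : (2:ℝ) ^ e ≤ (1 + t) ^ e := Real.rpow_le_rpow_of_nonpos h1t h1t2 he_neg
    nlinarith [hP.le]
end

section
/- Suppose that for every sufficiently large natural number n with 8 ∤ n, n ≢ 2 (mod 3), and n ≢ 14 (mod 16), n is the sum of two squares and three fourth powers. Then for every natural number k ≥ 1, every sufficiently large natural number M is the sum of two squares, three fourth powers and a k-th power. -/
theorem corollary_from_theorem
    (hthm : ∃ n0 : ℕ, ∀ n : ℕ, n0 ≤ n → ¬ (8 ∣ n) → n % 3 ≠ 2 → n % 16 ≠ 14 →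
      ∃ x1 x2 x3 x4 x5 : ℤ, (n : ℤ) = x1 ^ 2 + x2 ^ 2 + x3 ^ 4 + x4 ^ 4 + x5 ^ 4)
    (k : ℕ) (hk : 1 ≤ k) :
    ∃ M0 : ℕ, ∀ M : ℕ, M0 ≤ M →
      ∃ (x1 x2 x3 x4 x5 : ℤ) (y : ℕ),
        (M : ℤ) = x1 ^ 2 + x2 ^ 2 + x3 ^ 4 + x4 ^ 4 + x5 ^ 4 + (y : ℤ) ^ k := by
  obtain ⟨n0, hthm⟩ := hthm
  refine ⟨n0 + 48 ^ k + 1, fun M hM => ?_⟩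
  have hk0 : k ≠ 0 := by omega
  set t : ℕ := if M % 16 = 0 ∨ M % 16 = 8 ∨ M % 16 = 14 then
      (if M % 3 = 2 then 1 else 33) else (if M % 3 = 2 then 16 else 48) with ht
  have ht48 : t ≤ 48 := by rw [ht]; split_ifs <;> omega
  have h16 : t ^ k % 16 = if M % 16 = 0 ∨ M % 16 = 8 ∨ M % 16 = 14 then 1 else 0 := by
    rw [ht]; split_ifs <;> rw [Nat.pow_mod] <;> norm_num [hk0]
  have h3 : t ^ k % 3 = if M % 3 = 2 then 1 else 0 := by
    rw [ht]; split_ifs <;> rw [Nat.pow_mod] <;> norm_num [hk0]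
  have hle : t ^ k ≤ 48 ^ k := Nat.pow_le_pow_left ht48 k
  set n := M - t ^ k with hn
  have hMn : M = n + t ^ k := by omega
  have hn0 : n0 ≤ n := by omega
  have h8 : ¬ (8 ∣ n) := by split_ifs at h16 h3 <;> omega
  have h3' : n % 3 ≠ 2 := by split_ifs at h16 h3 <;> omega
  have h16' : n % 16 ≠ 14 := by split_ifs at h16 h3 <;> omega
  obtain ⟨x1, x2, x3, x4, x5, hx⟩ := hthm n hn0 h8 h3' h16'
  refine ⟨x1, x2, x3, x4, x5, t, ?_⟩
  have : (M : ℤ) = (n : ℤ) + (t : ℤ) ^ k := by exact_mod_cast hMn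
  rw [this, hx]
end
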